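/- (Eigenvalue bounds for a general square matrix via its real and imaginary parts) Let n ≥ 1 and let M be any n×n complex matrix, with real part Re M = (M + M*)/2 and imaginary part Im M = (M − M*)/(2i), both Hermitian. Then: (1) every eigenvalue ζ of M satisfies |ζ − iγ| ≤ ‖Re M‖ for some eigenvalue γ of Im M (i.e. σ(M) lies in the union of the closed discs of radius ‖Re M‖ centered at the points iγ, γ ∈ σ(Im M)); and (2) for every eigenvalue ζ of M there exists γ ∈ σ(Im M) with ‖Im M‖ ≥ |Im ζ| ≥ |γ| − ‖Re M‖. -/

import Mathlib

open Matrix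

noncomputable section

/-- The ℓ²→ℓ² operator norm of a complex matrix. -/
def opN {n : Type*} [Fintype n] [DecidableEq n] (M : Matrix n n ℂ) : ℝ :=
  ‖Matrix.toEuclideanCLM (𝕜 := ℂ) M‖

/-- The Hermitian real part `Re M = (M + M*)/2` of a square complex matrix. -/
def reM {n : Type*} [Fintype n] (M : Matrix n n ℂ) : Matrix n n ℂ :=
  (2 : ℂ)⁻¹ • (M + Mᴴ)

/-- The Hermitian imaginary part `Im M = (M − M*)/(2i)` of a square complex matrix. -/
def imM {n : Type*} [Fintype n] (M : Matrix n n ℂ) : Matrix n n ℂ :=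
  (2 * Complex.I)⁻¹ • (M - Mᴴ)

section Helpers

variable {n : Type*} [Fintype n] [DecidableEq n]

lemma spectrum_matrix_eq (M : Matrix n n ℂ) :
    spectrum ℂ M = spectrum ℂ (Matrix.toLin' M) :=
  (AlgEquiv.spectrum_eq Matrix.toLinAlgEquiv' M).symm

lemma mem_spectrum_of_eigenvec {M : Matrix n n ℂ} {μ : ℂ} {v : n → ℂ}
    (hv : v ≠ 0) (h : M *ᵥ v = μ • v) : μ ∈ spectrum ℂ M := by
  rw [spectrum_matrix_eq, ← Module.End.hasEigenvalue_iff_mem_spectrum]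
  exact Module.End.hasEigenvalue_of_hasEigenvector
    ⟨Module.End.mem_eigenspace_iff.mpr (by simpa [Matrix.toLin'_apply] using h), hv⟩

lemma exists_eigenvec_of_mem_spectrum {M : Matrix n n ℂ} {μ : ℂ}
    (h : μ ∈ spectrum ℂ M) : ∃ v : n → ℂ, v ≠ 0 ∧ M *ᵥ v = μ • v := by
  rw [spectrum_matrix_eq, ← Module.End.hasEigenvalue_iff_mem_spectrum] at h
  obtain ⟨v, hv⟩ := h.exists_hasEigenvector
  exact ⟨v, hv.2, by simpa [Matrix.toLin'_apply] using hv.apply_eq_smul⟩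

lemma eigenvalues_mem_spectrum_complex {H : Matrix n n ℂ} (hH : H.IsHermitian) (j : n) :
    (hH.eigenvalues j : ℂ) ∈ spectrum ℂ H := by
  apply mem_spectrum_of_eigenvec (v := ⇑(hH.eigenvectorBasis j))
  · intro h
    apply hH.eigenvectorBasis.orthonormal.ne_zero j
    ext i
    exact congrFun h i
  · rw [hH.mulVec_eigenvectorBasis j]
    ext i
    simp [Complex.real_smul]

lemma opN_mulVec_le (A : Matrix n n ℂ) (x : n → ℂ) :
    ‖(WithLp.equiv 2 (n → ℂ)).symm (A *ᵥ x)‖ ≤ opN A * ‖(WithLp.equiv 2 (n → ℂ)).symm x‖ := by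
  have h := (Matrix.toEuclideanCLM (𝕜 := ℂ) A).le_opNorm ((WithLp.equiv 2 (n → ℂ)).symm x)
  have heq : Matrix.toEuclideanCLM (𝕜 := ℂ) A ((WithLp.equiv 2 (n → ℂ)).symm x) =
      (WithLp.equiv 2 (n → ℂ)).symm (Matrix.toLin' A x) := rfl
  rw [Matrix.toLin'_apply] at heq
  rw [heq] at h
  exact h

lemma unitary_mulVec_norm {U : Matrix n n ℂ} (hU : U ∈ Matrix.unitaryGroup n ℂ) (x : n → ℂ) :
    ‖(WithLp.equiv 2 (n → ℂ)).symm (U *ᵥ x)‖ = ‖(WithLp.equiv 2 (n → ℂ)).symm x‖ := by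
  have hu : Matrix.toEuclideanCLM (𝕜 := ℂ) U ∈ unitary _ := by
    rw [Unitary.mem_iff]
    constructor
    · rw [← map_star, ← _root_.map_mul, (Matrix.mem_unitaryGroup_iff').mp hU, _root_.map_one]
    · rw [← map_star, ← _root_.map_mul, (Matrix.mem_unitaryGroup_iff).mp hU, _root_.map_one]
  have h := ContinuousLinearMap.norm_map_of_mem_unitary hu ((WithLp.equiv 2 (n → ℂ)).symm x)
  have heq : Matrix.toEuclideanCLM (𝕜 := ℂ) U ((WithLp.equiv 2 (n → ℂ)).symm x) =
      (WithLp.equiv 2 (n → ℂ)).symm (Matrix.toLin' U x) := rfl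
  rw [Matrix.toLin'_apply] at heq
  rw [heq] at h
  exact h

lemma diag_bound (d : n → ℂ) (w : n → ℂ) {c : ℝ} (hc : 0 ≤ c)
    (h : ∀ i, c ≤ ‖d i‖) :
    c * ‖(WithLp.equiv 2 (n → ℂ)).symm w‖ ≤
      ‖(WithLp.equiv 2 (n → ℂ)).symm ((Matrix.diagonal d) *ᵥ w)‖ := by
  rw [EuclideanSpace.norm_eq, EuclideanSpace.norm_eq]
  simp only [WithLp.equiv_symm_apply, PiLp.toLp_apply]
  rw [← Real.sqrt_sq hc, ← Real.sqrt_mul (sq_nonneg c), Finset.mul_sum]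
  apply Real.sqrt_le_sqrt
  apply Finset.sum_le_sum
  intro i _
  rw [Matrix.mulVec_diagonal]
  rw [norm_mul, mul_pow]
  have h1 : c ^ 2 ≤ ‖d i‖ ^ 2 := by
    have := h i
    exact pow_le_pow_left₀ hc this 2
  exact mul_le_mul_of_nonneg_right h1 (sq_nonneg _)

end Helpers

lemma key_lemma {n : ℕ} (hn : 1 ≤ n) (M H : Matrix (Fin n) (Fin n) ℂ)
    (hH : H.IsHermitian) (c : ℂ) {ζ : ℂ} (hζ : ζ ∈ spectrum ℂ M) :
    ∃ j : Fin n, ‖ζ - c * hH.eigenvalues j‖ ≤ opN (M - c • H) := by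
  obtain ⟨v, hv0, hv⟩ := exists_eigenvec_of_mem_spectrum hζ
  set U : Matrix (Fin n) (Fin n) ℂ := ↑(hH.eigenvectorUnitary) with hUdef
  set D : Matrix (Fin n) (Fin n) ℂ := Matrix.diagonal (Complex.ofReal ∘ hH.eigenvalues) with hDdef
  set d : Fin n → ℂ := fun j => ζ - c * hH.eigenvalues j with hddef
  haveI : Nonempty (Fin n) := Fin.pos_iff_nonempty.mp hn
  obtain ⟨j0, -, hj0⟩ := Finset.exists_min_image Finset.univ
    (fun j => ‖d j‖) ⟨Classical.arbitrary _, Finset.mem_univ _⟩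
  refine ⟨j0, ?_⟩
  set w : Fin n → ℂ := (star U) *ᵥ v with hwdef
  have hU : U ∈ Matrix.unitaryGroup (Fin n) ℂ := hH.eigenvectorUnitary.2
  have hUstar : star U ∈ Matrix.unitaryGroup (Fin n) ℂ := Unitary.star_mem hU
  have hdiag : Matrix.diagonal d = ζ • (1 : Matrix (Fin n) (Fin n) ℂ) - c • D := by
    ext i j
    by_cases hij : i = j <;>
      simp [hDdef, hddef, Matrix.diagonal, Matrix.one_apply, hij, Function.comp]
  have hmul : U * Matrix.diagonal d * star U
      = ζ • (1 : Matrix (Fin n) (Fin n) ℂ) - c • H := by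
    rw [hdiag, Matrix.mul_sub, Matrix.sub_mul, mul_smul_comm, mul_smul_comm,
      smul_mul_assoc, smul_mul_assoc, mul_one, (Matrix.mem_unitaryGroup_iff).mp hU]
    have hsp : U * D * star U = H := by
      rw [hUdef, hDdef]; exact hH.spectral_theorem.symm
    rw [hsp]
  have key_eq : (M - c • H) *ᵥ v = U *ᵥ (Matrix.diagonal d *ᵥ w) := by
    rw [hwdef, Matrix.mulVec_mulVec, Matrix.mulVec_mulVec, hmul]
    simp [Matrix.sub_mulVec, Matrix.smul_mulVec, Matrix.one_mulVec, hv]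
  have hnv : (0:ℝ) < ‖(WithLp.equiv 2 (Fin n → ℂ)).symm v‖ := by
    rw [norm_pos_iff]
    simpa using hv0
  have chain : ‖d j0‖ * ‖(WithLp.equiv 2 (Fin n → ℂ)).symm v‖
      ≤ opN (M - c • H) * ‖(WithLp.equiv 2 (Fin n → ℂ)).symm v‖ := by
    calc ‖d j0‖ * ‖(WithLp.equiv 2 (Fin n → ℂ)).symm v‖
        = ‖d j0‖ * ‖(WithLp.equiv 2 (Fin n → ℂ)).symm w‖ := by
          rw [hwdef, unitary_mulVec_norm hUstar]
      _ ≤ ‖(WithLp.equiv 2 (Fin n → ℂ)).symm (Matrix.diagonal d *ᵥ w)‖ :=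
          diag_bound d w (norm_nonneg _) (fun i => hj0 i (Finset.mem_univ i))
      _ = ‖(WithLp.equiv 2 (Fin n → ℂ)).symm (U *ᵥ (Matrix.diagonal d *ᵥ w))‖ :=
          (unitary_mulVec_norm hU _).symm
      _ = ‖(WithLp.equiv 2 (Fin n → ℂ)).symm ((M - c • H) *ᵥ v)‖ := by rw [key_eq]
      _ ≤ opN (M - c • H) * ‖(WithLp.equiv 2 (Fin n → ℂ)).symm v‖ := opN_mulVec_le _ _
  exact le_of_mul_le_mul_right chain hnv

section Decomp

variable {n : Type*} [Fintype n] [DecidableEq n]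

omit [DecidableEq n] in
lemma isHermitian_imM (M : Matrix n n ℂ) : (imM M).IsHermitian := by
  unfold imM
  rw [Matrix.IsHermitian, Matrix.conjTranspose_smul, Matrix.conjTranspose_sub,
    Matrix.conjTranspose_conjTranspose]
  have h : star ((2 * Complex.I)⁻¹) = -(2 * Complex.I)⁻¹ := by
    simp [Complex.star_def, map_inv₀, Complex.conj_I]
  rw [h, neg_smul, ← smul_neg, neg_sub]

omit [DecidableEq n] in
lemma isHermitian_reM (M : Matrix n n ℂ) : (reM M).IsHermitian := by
  unfold reM
  rw [Matrix.IsHermitian, Matrix.conjTranspose_smul, Matrix.conjTranspose_add,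
    Matrix.conjTranspose_conjTranspose]
  have h : star ((2:ℂ)⁻¹) = (2:ℂ)⁻¹ := by
    simp
  rw [h, add_comm]

omit [DecidableEq n] in
lemma decomp_re (M : Matrix n n ℂ) : M - Complex.I • imM M = reM M := by
  have hI : (2 * Complex.I)⁻¹ = -(2:ℂ)⁻¹ * Complex.I := by
    rw [mul_inv, Complex.inv_I]; ring
  ext i j
  simp only [reM, imM, Matrix.sub_apply, Matrix.smul_apply, Matrix.add_apply,
    Matrix.conjTranspose_apply, smul_eq_mul, hI]
  ring_nf
  simp only [Complex.I_sq]
  ring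

omit [DecidableEq n] in
lemma decomp_im (M : Matrix n n ℂ) : M - (1:ℂ) • reM M = Complex.I • imM M := by
  have hI : (2 * Complex.I)⁻¹ = -(2:ℂ)⁻¹ * Complex.I := by
    rw [mul_inv, Complex.inv_I]; ring
  ext i j
  simp only [reM, imM, Matrix.sub_apply, Matrix.smul_apply, Matrix.add_apply,
    Matrix.conjTranspose_apply, smul_eq_mul, hI]
  ring_nf
  simp only [Complex.I_sq]
  ring

set_option synthInstance.maxHeartbeats 400000 in
lemma opN_I_smul (A : Matrix n n ℂ) : opN (Complex.I • A) = opN A := by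
  unfold opN
  rw [_root_.map_smul]
  rw [norm_smul Complex.I (Matrix.toEuclideanCLM (𝕜 := ℂ) A), Complex.norm_I, one_mul]

end Decomp

/-- **Eigenvalue bounds for a general square matrix via its real and imaginary parts.**
(1) every eigenvalue `ζ` of `M` satisfies `|ζ − iγ| ≤ ‖Re M‖` for some eigenvalue `γ` of
`Im M`; (2) for every eigenvalue `ζ` of `M` there is `γ ∈ σ(Im M)` with
`‖Im M‖ ≥ |Im ζ| ≥ |γ| − ‖Re M‖`. -/
theorem eigenvalue_bounds_general
    {n : ℕ} (hn : 1 ≤ n) (M : Matrix (Fin n) (Fin n) ℂ) :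
    (∀ ζ ∈ spectrum ℂ M, ∃ γ : ℝ, (γ : ℂ) ∈ spectrum ℂ (imM M) ∧
      ‖ζ - Complex.I * (γ : ℂ)‖ ≤ opN (reM M)) ∧
    (∀ ζ ∈ spectrum ℂ M, ∃ γ : ℝ, (γ : ℂ) ∈ spectrum ℂ (imM M) ∧
      |ζ.im| ≤ opN (imM M) ∧ |γ| - opN (reM M) ≤ |ζ.im|) := by
  have hIm := isHermitian_imM M
  have hRe := isHermitian_reM M
  have part1 : ∀ ζ ∈ spectrum ℂ M, ∃ γ : ℝ, (γ : ℂ) ∈ spectrum ℂ (imM M) ∧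
      ‖ζ - Complex.I * (γ : ℂ)‖ ≤ opN (reM M) := by
    intro ζ hζ
    obtain ⟨j, hj⟩ := key_lemma hn M (imM M) hIm Complex.I hζ
    rw [decomp_re M] at hj
    exact ⟨hIm.eigenvalues j, eigenvalues_mem_spectrum_complex hIm j, hj⟩
  refine ⟨part1, ?_⟩
  intro ζ hζ
  obtain ⟨γ, hγmem, hγ⟩ := part1 ζ hζ
  have him : |ζ.im| ≤ opN (imM M) := by
    obtain ⟨j, hj⟩ := key_lemma hn M (reM M) hRe 1 hζ
    rw [decomp_im M, opN_I_smul] at hj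
    calc |ζ.im| = |(ζ - 1 * (hRe.eigenvalues j : ℂ)).im| := by simp
      _ ≤ ‖ζ - 1 * (hRe.eigenvalues j : ℂ)‖ := Complex.abs_im_le_norm _
      _ ≤ opN (imM M) := hj
  refine ⟨γ, hγmem, him, ?_⟩
  have h1 : |ζ.im - γ| ≤ opN (reM M) := by
    calc |ζ.im - γ| = |(ζ - Complex.I * γ).im| := by simp
      _ ≤ ‖ζ - Complex.I * γ‖ := Complex.abs_im_le_norm _
      _ ≤ opN (reM M) := hγ
  have h2 : |γ| - |ζ.im| ≤ |ζ.im - γ| := by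
    have := abs_sub_abs_le_abs_sub γ ζ.im
    rwa [abs_sub_comm] at this
  linarith
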